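/- Let H be a real Hilbert space, A: H → 2^H maximally monotone, x, u* ∈ H, γ > 0. Then H_A(x,u*) ≥ ‖x − J_{γA}(x + γu*)‖²/γ, where J_{γA} = (Id + γA)^{-1} is the resolvent. -/

import Mathlib

open scoped Topology RealInnerProductSpace

variable {H : Type*} [NormedAddCommGroup H] [InnerProductSpace ℝ H] [CompleteSpace H]

/-- The Haraux function of a set-valued operator on a real Hilbert space. -/
noncomputable def harauxH (A : H → Set H) (x u : H) : EReal :=
  ⨆ (p : H × H) (_ : p.2 ∈ A p.1), ((⟪x - p.1, p.2 - u⟫ : ℝ) : EReal)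

/-- Monotonicity on a real Hilbert space. -/
def IsMonotoneH (A : H → Set H) : Prop :=
  ∀ ⦃x x' y y'⦄, x' ∈ A x → y' ∈ A y → (0 : ℝ) ≤ ⟪x - y, x' - y'⟫

/-- Maximal monotonicity on a real Hilbert space. -/
def IsMaxMonotoneH (A : H → Set H) : Prop :=
  IsMonotoneH A ∧
    ∀ ⦃x x'⦄, (∀ ⦃y y'⦄, y' ∈ A y → (0 : ℝ) ≤ ⟪x - y, x' - y'⟫) → x' ∈ A x

/-- Carlier's inequality: `H_A(x,u*) ≥ ‖x − J_{γA}(x + γu*)‖²/γ`, where `J_{γA}` is the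
resolvent `(Id + γA)⁻¹` of the maximally monotone operator `A`. -/
theorem haraux_ge_resolvent_bound
    (A : H → Set H) (hA : IsMaxMonotoneH A) (γ : ℝ) (hγ : 0 < γ)
    (J : H → H) (hJ : ∀ w : H, ∃ a ∈ A (J w), w = J w + γ • a)
    (x u : H) :
    ((‖x - J (x + γ • u)‖ ^ 2 / γ : ℝ) : EReal) ≤ harauxH A x u := by
  obtain ⟨a, ha, hw⟩ := hJ (x + γ • u)
  set p := J (x + γ • u) with hp
  have hxp : x - p = γ • (a - u) := by
    have : x + γ • u = p + γ • a := hw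
    rw [smul_sub]
    linear_combination (norm := module) this
  have hkey : (‖x - p‖ ^ 2 / γ : ℝ) = ⟪x - p, a - u⟫ := by
    rw [hxp, norm_smul, real_inner_smul_left, real_inner_self_eq_norm_sq]
    rw [mul_pow, Real.norm_eq_abs, sq_abs]
    field_simp
  rw [hkey]
  exact le_iSup_of_le (p, a) (le_iSup_of_le ha le_rfl)
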